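/- arXiv:1902.06982 — 3 statements merged into one kernel-verified Lean document; each statement's English description precedes it below -/
import Mathlib

section
/- Let h : ℝ² × (ℝ² \ {0}) → ℝ be defined by h(z,ξ) = √(‖ξ‖² + ⟨z,ξ⟩²) (the Hamiltonian of the hyperbolic metric g = (1/(1+u²+v²))[(1+v²)du² − 2uv du dv + (1+u²)dv²] on ℝ², whose inverse metric is g⁻¹(z) = I₂ + z zᵀ). Then for every η ∈ ℝ² with η ≠ 0, the curves z*(t) = sinh(t) η/‖η‖ and ξ*(t) = η/cosh(t), defined for all t ∈ ℝ, satisfy Hamilton's equations ż*(t) = ∂h/∂ξ(z*(t), ξ*(t)) and ξ̇*(t) = −∂h/∂z(z*(t), ξ*(t)), with initial conditions z*(0) = 0 and ξ*(0) = η. -/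
open Real

lemma key (z x : EuclideanSpace ℝ (Fin 2)) (hpos : 0 < ‖x‖ ^ 2 + (inner ℝ z x : ℝ) ^ 2) :
    HasGradientAt (fun ξ : EuclideanSpace ℝ (Fin 2) => Real.sqrt (‖ξ‖ ^ 2 + (inner ℝ z ξ : ℝ) ^ 2))
      ((Real.sqrt (‖x‖ ^ 2 + (inner ℝ z x : ℝ) ^ 2))⁻¹ • (x + (inner ℝ z x : ℝ) • z)) x := by
  have hinner : HasFDerivAt (fun ξ : EuclideanSpace ℝ (Fin 2) => (inner ℝ z ξ : ℝ)) (innerSL ℝ z) x :=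
    (innerSL ℝ z).hasFDerivAt
  have hfun : (fun ξ : EuclideanSpace ℝ (Fin 2) => ‖ξ‖ ^ 2 + (inner ℝ z ξ : ℝ) ^ 2)
      = fun ξ => (inner ℝ ξ ξ : ℝ) + (inner ℝ z ξ : ℝ) * (inner ℝ z ξ : ℝ) := by
    funext ξ; rw [real_inner_self_eq_norm_sq]; ring
  have h1 := ((hasFDerivAt_id x).inner ℝ (hasFDerivAt_id x)).add (hinner.mul hinner)
  simp only [id_eq] at h1
  change HasFDerivAt (fun ξ : EuclideanSpace ℝ (Fin 2) => (inner ℝ ξ ξ : ℝ) + (inner ℝ z ξ : ℝ) * (inner ℝ z ξ : ℝ)) _ x at h1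
  rw [← hfun] at h1
  have hs : HasDerivAt Real.sqrt (1 / (2 * Real.sqrt (‖x‖ ^ 2 + (inner ℝ z x : ℝ) ^ 2)))
      (‖x‖ ^ 2 + (inner ℝ z x : ℝ) ^ 2) := Real.hasDerivAt_sqrt hpos.ne'
  have h2 := hs.comp_hasFDerivAt x h1
  rw [hasGradientAt_iff_hasFDerivAt]
  have hsq : Real.sqrt (‖x‖ ^ 2 + (inner ℝ z x : ℝ) ^ 2) ≠ 0 := (Real.sqrt_pos.2 hpos).ne'
  have heq : (InnerProductSpace.toDual ℝ (EuclideanSpace ℝ (Fin 2)))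
        ((Real.sqrt (‖x‖ ^ 2 + (inner ℝ z x : ℝ) ^ 2))⁻¹ • (x + (inner ℝ z x : ℝ) • z))
      = (1 / (2 * Real.sqrt (‖x‖ ^ 2 + (inner ℝ z x : ℝ) ^ 2))) •
        ((fderivInnerCLM ℝ (x, x)).comp
            ((ContinuousLinearMap.id ℝ _).prod (ContinuousLinearMap.id ℝ _))
          + ((inner ℝ z x : ℝ) • innerSL ℝ z + (inner ℝ z x : ℝ) • innerSL ℝ z)) := by
    ext y
    simp only [InnerProductSpace.toDual_apply_apply, ContinuousLinearMap.add_apply,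
      ContinuousLinearMap.smul_apply, ContinuousLinearMap.comp_apply,
      ContinuousLinearMap.prod_apply, ContinuousLinearMap.id_apply, fderivInnerCLM_apply,
      innerSL_apply_apply, inner_add_left, real_inner_smul_left, smul_eq_mul,
      real_inner_comm x y]
    field_simp
    ring
  rw [heq]
  exact h2

lemma key2 (ξ x : EuclideanSpace ℝ (Fin 2)) (hpos : 0 < ‖ξ‖ ^ 2 + (inner ℝ x ξ : ℝ) ^ 2) :
    HasGradientAt (fun z : EuclideanSpace ℝ (Fin 2) => Real.sqrt (‖ξ‖ ^ 2 + (inner ℝ z ξ : ℝ) ^ 2))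
      ((Real.sqrt (‖ξ‖ ^ 2 + (inner ℝ x ξ : ℝ) ^ 2))⁻¹ • ((inner ℝ x ξ : ℝ) • ξ)) x := by
  have hinner : HasFDerivAt (fun z : EuclideanSpace ℝ (Fin 2) => (inner ℝ z ξ : ℝ)) (innerSL ℝ ξ) x := by
    have h := (innerSL ℝ ξ).hasFDerivAt (x := x)
    have : (fun z : EuclideanSpace ℝ (Fin 2) => (inner ℝ z ξ : ℝ)) = fun z => (innerSL ℝ ξ) z := by
      funext z; exact (real_inner_comm z ξ).symm
    rw [this]; exact h
  have h1 := (hasFDerivAt_const (‖ξ‖ ^ 2) x).add (hinner.mul hinner)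
  have hfun : (fun z : EuclideanSpace ℝ (Fin 2) => ‖ξ‖ ^ 2 + (inner ℝ z ξ : ℝ) ^ 2)
      = fun z => ‖ξ‖ ^ 2 + (inner ℝ z ξ : ℝ) * (inner ℝ z ξ : ℝ) := by
    funext z; ring
  change HasFDerivAt (fun z : EuclideanSpace ℝ (Fin 2) => ‖ξ‖ ^ 2 + (inner ℝ z ξ : ℝ) * (inner ℝ z ξ : ℝ)) _ x at h1
  rw [← hfun] at h1
  have hs : HasDerivAt Real.sqrt (1 / (2 * Real.sqrt (‖ξ‖ ^ 2 + (inner ℝ x ξ : ℝ) ^ 2)))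
      (‖ξ‖ ^ 2 + (inner ℝ x ξ : ℝ) ^ 2) := Real.hasDerivAt_sqrt hpos.ne'
  have h2 := hs.comp_hasFDerivAt x h1
  rw [hasGradientAt_iff_hasFDerivAt]
  have hsq : Real.sqrt (‖ξ‖ ^ 2 + (inner ℝ x ξ : ℝ) ^ 2) ≠ 0 := (Real.sqrt_pos.2 hpos).ne'
  have heq : (InnerProductSpace.toDual ℝ (EuclideanSpace ℝ (Fin 2)))
        ((Real.sqrt (‖ξ‖ ^ 2 + (inner ℝ x ξ : ℝ) ^ 2))⁻¹ • ((inner ℝ x ξ : ℝ) • ξ))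
      = (1 / (2 * Real.sqrt (‖ξ‖ ^ 2 + (inner ℝ x ξ : ℝ) ^ 2))) •
        (0 + ((inner ℝ x ξ : ℝ) • innerSL ℝ ξ + (inner ℝ x ξ : ℝ) • innerSL ℝ ξ)) := by
    ext y
    simp only [InnerProductSpace.toDual_apply_apply, ContinuousLinearMap.add_apply,
      ContinuousLinearMap.smul_apply, ContinuousLinearMap.zero_apply, innerSL_apply_apply,
      real_inner_smul_left, smul_eq_mul]
    field_simp
    ring
  rw [heq]
  exact h2

/-- The curves `z*(t) = sinh(t) η/‖η‖`, `ξ*(t) = η/cosh(t)` satisfy Hamilton's equations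
for the Hamiltonian `h(z,ξ) = √(‖ξ‖² + ⟨z,ξ⟩²)` of the hyperbolic metric on `ℝ²`,
for all `t ∈ ℝ`, with initial conditions `z*(0) = 0`, `ξ*(0) = η`. -/
theorem stmt_7 (η : EuclideanSpace ℝ (Fin 2)) (hη : η ≠ 0) :
    let h : EuclideanSpace ℝ (Fin 2) → EuclideanSpace ℝ (Fin 2) → ℝ :=
      fun z ξ => Real.sqrt (‖ξ‖ ^ 2 + (inner ℝ z ξ : ℝ) ^ 2)
    let zs : ℝ → EuclideanSpace ℝ (Fin 2) := fun t => (Real.sinh t / ‖η‖) • η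
    let ξs : ℝ → EuclideanSpace ℝ (Fin 2) := fun t => (Real.cosh t)⁻¹ • η
    zs 0 = 0 ∧ ξs 0 = η ∧
      ∀ t : ℝ,
        HasDerivAt zs (gradient (fun ξ => h (zs t) ξ) (ξs t)) t ∧
        HasDerivAt ξs (-gradient (fun z => h z (ξs t)) (zs t)) t := by
  intro h zs ξs
  have hn : (0:ℝ) < ‖η‖ := norm_pos_iff.2 hη
  have hn' : ‖η‖ ≠ 0 := hn.ne'
  refine ⟨by simp [zs], by simp [ξs], fun t => ?_⟩
  set s := Real.sinh t with hs_def
  set c := Real.cosh t with hc_def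
  have hc : (0:ℝ) < c := by rw [hc_def]; exact Real.cosh_pos t
  have hc' : c ≠ 0 := hc.ne'
  have hc2 : c ^ 2 = 1 + s ^ 2 := by rw [hc_def, hs_def, Real.cosh_sq]; ring
  have hiz : (inner ℝ (zs t) (ξs t) : ℝ) = s * ‖η‖ / c := by
    simp only [zs, ξs, real_inner_smul_left, real_inner_smul_right,
      real_inner_self_eq_norm_sq]
    field_simp
    ring
  have hnx : ‖ξs t‖ ^ 2 = ‖η‖ ^ 2 / c ^ 2 := by
    simp only [ξs, norm_smul, mul_pow, norm_inv, Real.norm_eq_abs, abs_of_pos (Real.cosh_pos t), ← hc_def, abs_of_pos hc]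
    field_simp
  have hsum : ‖ξs t‖ ^ 2 + (inner ℝ (zs t) (ξs t) : ℝ) ^ 2 = ‖η‖ ^ 2 := by
    rw [hnx, hiz]
    field_simp
    nlinarith [hc2]
  have hpos : 0 < ‖ξs t‖ ^ 2 + (inner ℝ (zs t) (ξs t) : ℝ) ^ 2 := by
    rw [hsum]; positivity
  have hsqrt : Real.sqrt (‖ξs t‖ ^ 2 + (inner ℝ (zs t) (ξs t) : ℝ) ^ 2) = ‖η‖ := by
    rw [hsum]; exact Real.sqrt_sq hn.le
  constructor
  · have hg := (key (zs t) (ξs t) hpos).gradient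
    have hval : gradient (fun ξ => h (zs t) ξ) (ξs t) = (c / ‖η‖) • η := by
      rw [show (fun ξ => h (zs t) ξ) = fun ξ : EuclideanSpace ℝ (Fin 2) =>
        Real.sqrt (‖ξ‖ ^ 2 + (inner ℝ (zs t) ξ : ℝ) ^ 2) from rfl, hg, hsqrt, hiz]
      show (‖η‖)⁻¹ • (c⁻¹ • η + (s * ‖η‖ / c) • (s / ‖η‖) • η) = (c / ‖η‖) • η
      rw [smul_smul, ← add_smul, smul_smul]
      congr 1
      field_simp
      nlinarith [hc2]
    rw [hval]
    have hd : HasDerivAt (fun u => Real.sinh u / ‖η‖) (c / ‖η‖) t :=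
      (Real.hasDerivAt_sinh t).div_const ‖η‖
    exact hd.smul_const η
  · have hg := (key2 (ξs t) (zs t) hpos).gradient
    have hval : gradient (fun z => h z (ξs t)) (zs t) = (s / c ^ 2) • η := by
      rw [show (fun z => h z (ξs t)) = fun z : EuclideanSpace ℝ (Fin 2) =>
        Real.sqrt (‖ξs t‖ ^ 2 + (inner ℝ z (ξs t) : ℝ) ^ 2) from rfl, hg]
      rw [hsqrt, hiz]
      show (‖η‖)⁻¹ • (s * ‖η‖ / c) • c⁻¹ • η = (s / c ^ 2) • η
      rw [smul_smul, smul_smul]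
      congr 1
      field_simp
    rw [hval]
    have hinv : HasDerivAt (fun u => (Real.cosh u)⁻¹) (-(s / c ^ 2)) t := by
      have h2 := (Real.hasDerivAt_cosh t).inv hc'
      rw [show -(s / c ^ 2) = -sinh t / cosh t ^ 2 by rw [hs_def, hc_def]; ring]
      exact h2
    rw [← neg_smul]
    exact hinv.smul_const η
end

section
/- Let d ≥ 1, let U ⊆ ℝ^d be open, let g : U → (symmetric positive definite real d×d matrices) be smooth with inverse matrix g⁻¹(x) = (g^{μν}(x)), and define h(x,ξ) = √(Σ_{μν} g^{μν}(x) ξ_μ ξ_ν) for x ∈ U, ξ ∈ ℝ^d \ {0}. Let (x*, ξ*) : I → U × (ℝ^d \ {0}) (I ⊆ ℝ an open interval) satisfy Hamilton's equations for h. Let φ : I × U → ℂ be twice continuously differentiable and suppose that for all t ∈ I: φ(t, x*(t)) = 0 and ∂φ/∂x^α(t, x*(t)) = ξ*_α(t) for all α. Define b₂(t,x) := −(∂φ/∂t(t,x))² + Σ_{μν} g^{μν}(x) (∂φ/∂x^μ)(t,x) (∂φ/∂x^ν)(t,x). Then b₂ has a second-order zero in x along the flow: for every t ∈ I, b₂(t,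 x*(t)) = 0 and ∂b₂/∂x^μ(t, x*(t)) = 0 for every μ. -/
open scoped BigOperators

-- smoothness of det of a matrix-valued function
lemma contDiffOn_det' {d : ℕ} {U : Set (Fin d → ℝ)} {M : (Fin d → ℝ) → Matrix (Fin d) (Fin d) ℝ}
    (hM : ∀ i j, ContDiffOn ℝ (⊤ : ℕ∞) (fun x => M x i j) U) :
    ContDiffOn ℝ (⊤ : ℕ∞) (fun x => (M x).det) U := by
  simp_rw [Matrix.det_apply']
  exact ContDiffOn.sum fun σ _ => ContDiffOn.mul contDiffOn_const
    (contDiffOn_prod fun i _ => hM (σ i) i)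

lemma contDiffOn_inv_entry {d : ℕ} {U : Set (Fin d → ℝ)} (hU : IsOpen U)
    {g : (Fin d → ℝ) → Matrix (Fin d) (Fin d) ℝ}
    (hg : ∀ μ ν, ContDiffOn ℝ (⊤ : ℕ∞) (fun x => g x μ ν) U)
    (hdet : ∀ x ∈ U, (g x).det ≠ 0) (μ ν : Fin d) :
    ContDiffOn ℝ (⊤ : ℕ∞) (fun x => (g x)⁻¹ μ ν) U := by
  have hadj : ContDiffOn ℝ (⊤ : ℕ∞) (fun x => (g x).adjugate μ ν) U := by
    simp_rw [Matrix.adjugate_apply]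
    apply contDiffOn_det'
    intro i j
    by_cases hiν : i = ν
    · subst hiν; simp only [Matrix.updateRow_self]; exact contDiffOn_const
    · simp only [Matrix.updateRow_ne hiν]; exact hg i j
  have : ContDiffOn ℝ (⊤ : ℕ∞) (fun x => ((g x).det)⁻¹ * (g x).adjugate μ ν) U :=
    ((contDiffOn_det' hg).inv hdet).mul hadj
  refine this.congr fun x hx => ?_
  rw [Matrix.inv_def, Matrix.smul_apply, Ring.inverse_eq_inv', smul_eq_mul]

lemma clm_prod_decomp {d : ℕ} {M : Type*} [NormedAddCommGroup M] [NormedSpace ℝ M]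
    (L : (ℝ × (Fin d → ℝ)) →L[ℝ] M) (a : ℝ) (v : Fin d → ℝ) :
    L (a, v) = a • L (1, 0) +
      ∑ α, v α • L ((0 : ℝ), (Pi.single α 1 : Fin d → ℝ)) := by
  have hv : v = ∑ α, v α • (Pi.single α 1 : Fin d → ℝ) := by
    funext j
    simp [Pi.single_apply, Finset.sum_apply, mul_ite, Finset.sum_ite_eq']
  have h : (a, v) = a • ((1:ℝ), (0 : Fin d → ℝ))
      + ∑ α, v α • ((0:ℝ), (Pi.single α 1 : Fin d → ℝ)) := by
    rw [Prod.ext_iff]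
    constructor
    · simp [Prod.fst_sum]
    · simp only [Prod.smul_snd, Prod.snd_add, Prod.snd_sum]
      rw [← hv]
      simp
  rw [h, map_add, map_smul, map_sum]
  simp only [map_smul]

lemma hasFDerivAt_quadform {d : ℕ} (G : Matrix (Fin d) (Fin d) ℝ) (ξ : Fin d → ℝ) :
    HasFDerivAt (fun ξ : Fin d → ℝ => ∑ μ, ∑ ν, G μ ν * ξ μ * ξ ν)
      (∑ μ, ∑ ν, G μ ν • (ξ μ • ContinuousLinearMap.proj (R := ℝ) (φ := fun _ : Fin d => ℝ) ν
        + ξ ν • ContinuousLinearMap.proj (R := ℝ) (φ := fun _ : Fin d => ℝ) μ)) ξ := by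
  apply HasFDerivAt.fun_sum
  intro μ _
  apply HasFDerivAt.fun_sum
  intro ν _
  have h1 : HasFDerivAt (fun ξ : Fin d → ℝ => ξ μ)
      (ContinuousLinearMap.proj (R := ℝ) (φ := fun _ : Fin d => ℝ) μ) ξ := hasFDerivAt_apply μ ξ
  have h2 : HasFDerivAt (fun ξ : Fin d → ℝ => ξ ν)
      (ContinuousLinearMap.proj (R := ℝ) (φ := fun _ : Fin d => ℝ) ν) ξ := hasFDerivAt_apply ν ξ
  have h3 := (h1.mul h2).const_mul (G μ ν)
  simpa [mul_assoc] using h3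

set_option maxHeartbeats 2000000 in
/-- For a phase function `φ` of class `L_h` associated with the Hamiltonian
`h(x,ξ) = √(Σ g^{μν}(x) ξ_μ ξ_ν)`, the function
`b₂ = −(φ_t)² + Σ g^{μν} φ_{x^μ} φ_{x^ν}` has a second-order zero in `x` along the flow. -/
theorem stmt_11 (d : ℕ) (hd : 1 ≤ d)
    (U : Set (Fin d → ℝ)) (hU : IsOpen U)
    (g : (Fin d → ℝ) → Matrix (Fin d) (Fin d) ℝ)
    (hg : ∀ μ ν : Fin d, ContDiffOn ℝ (⊤ : ℕ∞) (fun x => g x μ ν) U)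
    (hsym : ∀ x ∈ U, (g x).IsSymm) (hpd : ∀ x ∈ U, (g x).PosDef)
    (I : Set ℝ) (hI : IsOpen I) (hIc : I.OrdConnected)
    (xs ξs : ℝ → Fin d → ℝ)
    (hmem : ∀ t ∈ I, xs t ∈ U) (hne : ∀ t ∈ I, ξs t ≠ 0)
    (ham1 : ∀ t ∈ I, HasDerivAt xs
      (fun α => fderiv ℝ
        (fun ξ : Fin d → ℝ => Real.sqrt (∑ μ, ∑ ν, (g (xs t))⁻¹ μ ν * ξ μ * ξ ν))
        (ξs t) (Pi.single α 1)) t)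
    (ham2 : ∀ t ∈ I, HasDerivAt ξs
      (fun α => -fderiv ℝ
        (fun x : Fin d → ℝ => Real.sqrt (∑ μ, ∑ ν, (g x)⁻¹ μ ν * ξs t μ * ξs t ν))
        (xs t) (Pi.single α 1)) t)
    (φ : ℝ → (Fin d → ℝ) → ℂ)
    (hφ : ContDiffOn ℝ 2 (fun p : ℝ × (Fin d → ℝ) => φ p.1 p.2) (I ×ˢ U))
    (hφ0 : ∀ t ∈ I, φ t (xs t) = 0)
    (hφx : ∀ t ∈ I, ∀ α : Fin d,
      fderiv ℝ (fun x => φ t x) (xs t) (Pi.single α 1) = ((ξs t α : ℝ) : ℂ)) :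
    let b₂ : ℝ → (Fin d → ℝ) → ℂ := fun t x =>
      -(deriv (fun s => φ s x) t) ^ 2
        + ∑ μ, ∑ ν, (((g x)⁻¹ μ ν : ℝ) : ℂ) *
            fderiv ℝ (fun y => φ t y) x (Pi.single μ 1) *
            fderiv ℝ (fun y => φ t y) x (Pi.single ν 1)
    ∀ t ∈ I, b₂ t (xs t) = 0 ∧
      ∀ μ : Fin d, fderiv ℝ (fun x => b₂ t x) (xs t) (Pi.single μ 1) = 0 := by
  intro b₂ t₀ ht₀
  -- notation
  set F : ℝ × (Fin d → ℝ) → ℂ := fun p => φ p.1 p.2 with hF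
  have hIU : IsOpen (I ×ˢ U) := hI.prod hU
  have hx₀ : xs t₀ ∈ U := hmem t₀ ht₀
  have hp₀ : (t₀, xs t₀) ∈ I ×ˢ U := ⟨ht₀, hx₀⟩
  set x₀ : Fin d → ℝ := xs t₀ with hx₀def
  set ξ₀ : Fin d → ℝ := ξs t₀ with hξ₀def
  set p₀ : ℝ × (Fin d → ℝ) := (t₀, x₀) with hp₀def
  set G : Matrix (Fin d) (Fin d) ℝ := (g x₀)⁻¹ with hGdef
  -- basic facts about G and Q
  have hGpd : G.PosDef := (hpd x₀ hx₀).inv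
  have hGsym : ∀ α β : Fin d, G α β = G β α := by
    have h1 : G.transpose = G := by
      rw [hGdef, Matrix.transpose_nonsing_inv, (hsym x₀ hx₀).eq]
    intro α β
    conv_lhs => rw [← h1]
    rfl
  set Q : ℝ := ∑ μ, ∑ ν, G μ ν * ξ₀ μ * ξ₀ ν with hQdef
  have hQpos : 0 < Q := by
    have h2 := hGpd.dotProduct_mulVec_pos (hne t₀ ht₀)
    have heq : dotProduct (star ξ₀) (G.mulVec ξ₀) = Q := by
      simp only [star_trivial, dotProduct, Matrix.mulVec, Finset.mul_sum, hQdef]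
      exact Finset.sum_congr rfl fun μ _ => Finset.sum_congr rfl fun ν _ => by ring
    rw [heq] at h2
    exact h2
  set H : ℝ := Real.sqrt Q with hHdef
  have hHpos : 0 < H := Real.sqrt_pos.mpr hQpos
  have hH2 : H ^ 2 = Q := Real.sq_sqrt hQpos.le
  set W : Fin d → ℝ := fun α => ∑ ν, G α ν * ξ₀ ν with hWdef
  -- the ξ-gradient of the Hamiltonian
  set Lq : (Fin d → ℝ) →L[ℝ] ℝ :=
    ∑ μ, ∑ ν, G μ ν • (ξ₀ μ • ContinuousLinearMap.proj (R := ℝ) (φ := fun _ : Fin d => ℝ) ν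
      + ξ₀ ν • ContinuousLinearMap.proj (R := ℝ) (φ := fun _ : Fin d => ℝ) μ) with hLqdef
  have hsqrtQ : HasDerivAt Real.sqrt (1 / (2 * H))
      ((fun ξ : Fin d → ℝ => ∑ μ, ∑ ν, G μ ν * ξ μ * ξ ν) ξ₀) := by
    simpa using Real.hasDerivAt_sqrt hQpos.ne'
  have hsq : HasFDerivAt (fun ξ : Fin d → ℝ => Real.sqrt (∑ μ, ∑ ν, G μ ν * ξ μ * ξ ν))
      ((1 / (2 * H)) • Lq) ξ₀ :=
    hsqrtQ.comp_hasFDerivAt ξ₀ (hasFDerivAt_quadform G ξ₀)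
  have hLqe : ∀ α, Lq (Pi.single α 1) = 2 * W α := by
    intro α
    rw [hLqdef]
    simp only [ContinuousLinearMap.coe_sum', Finset.sum_apply,
      ContinuousLinearMap.coe_smul', Pi.smul_apply, ContinuousLinearMap.add_apply,
      ContinuousLinearMap.proj_apply, Pi.single_apply, smul_eq_mul]
    have : ∀ μ ν : Fin d, G μ ν * (ξ₀ μ * (if ν = α then (1:ℝ) else 0)
        + ξ₀ ν * (if μ = α then (1:ℝ) else 0))
        = (if ν = α then G μ ν * ξ₀ μ else 0) + (if μ = α then G μ ν * ξ₀ ν else 0) := by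
      intro μ ν; split_ifs <;> ring
    rw [Finset.sum_congr rfl fun μ _ => Finset.sum_congr rfl fun ν _ => this μ ν]
    simp only [Finset.sum_add_distrib, Finset.sum_ite_eq', Finset.mem_univ, if_true]
    rw [show (∑ μ : Fin d, ∑ ν : Fin d, if μ = α then G μ ν * ξ₀ ν else 0)
        = ∑ μ : Fin d, if μ = α then ∑ ν, G μ ν * ξ₀ ν else 0 from
      Finset.sum_congr rfl fun μ _ => by split_ifs <;> simp]
    simp only [Finset.sum_ite_eq', Finset.mem_univ, if_true]
    have : ∑ μ : Fin d, G μ α * ξ₀ μ = W α := by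
      rw [hWdef]
      exact Finset.sum_congr rfl fun μ _ => by rw [hGsym α μ]
    rw [this, hWdef]
    ring
  -- the velocity of the spatial flow
  set Xd : Fin d → ℝ := fun α => fderiv ℝ
      (fun ξ : Fin d → ℝ => Real.sqrt (∑ μ, ∑ ν, (g (xs t₀))⁻¹ μ ν * ξ μ * ξ ν))
      (ξs t₀) (Pi.single α 1) with hXddef
  have hXd : ∀ α, Xd α = W α / H := by
    intro α
    have hfd : fderiv ℝ (fun ξ : Fin d → ℝ => Real.sqrt (∑ μ, ∑ ν, G μ ν * ξ μ * ξ ν)) ξ₀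
        = (1 / (2 * H)) • Lq := hsq.fderiv
    have : Xd α = ((1 / (2 * H)) • Lq) (Pi.single α 1) := by
      rw [hXddef, ← hfd]
    rw [this, ContinuousLinearMap.smul_apply, hLqe α, smul_eq_mul, eq_div_iff hHpos.ne']
    field_simp
  have hXdot : HasDerivAt xs Xd t₀ := ham1 t₀ ht₀
  -- sum identity: ∑ Xd α * ξ₀ α = H
  have hXsum : ∑ α, Xd α * ξ₀ α = H := by
    have h1 : ∑ α, W α * ξ₀ α = Q := by
      rw [hQdef]
      refine Finset.sum_congr rfl fun α _ => ?_
      simp only [hWdef, Finset.sum_mul]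
      exact Finset.sum_congr rfl fun ν _ => by ring
    have : ∑ α, Xd α * ξ₀ α = (∑ α, W α * ξ₀ α) / H := by
      rw [Finset.sum_div]
      exact Finset.sum_congr rfl fun α _ => by rw [hXd α]; ring
    rw [this, h1, ← hH2, sq, mul_div_assoc, div_self hHpos.ne', mul_one]
  -- x-side: derivative of the inverse-metric entries
  have hdet : ∀ x ∈ U, (g x).det ≠ 0 := fun x hx => (hpd x hx).det_pos.ne'
  have hinv : ∀ α β : Fin d, ContDiffOn ℝ (⊤ : ℕ∞) (fun x => (g x)⁻¹ α β) U :=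
    fun α β => contDiffOn_inv_entry hU hg hdet α β
  have hcd : ∀ α β : Fin d, DifferentiableAt ℝ (fun x => (g x)⁻¹ α β) x₀ := fun α β =>
    ((hinv α β).contDiffAt (hU.mem_nhds hx₀)).differentiableAt (by norm_num)
  set c : Fin d → Fin d → ((Fin d → ℝ) →L[ℝ] ℝ) :=
    fun α β => fderiv ℝ (fun x => (g x)⁻¹ α β) x₀ with hcdef
  have hcF : ∀ α β : Fin d, HasFDerivAt (fun x => (g x)⁻¹ α β) (c α β) x₀ :=
    fun α β => (hcd α β).hasFDerivAt
  set P : (Fin d → ℝ) →L[ℝ] ℝ := ∑ α, ∑ β, ξ₀ β • ξ₀ α • c α β with hPdef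
  have hr : HasFDerivAt (fun x => ∑ α, ∑ β, (g x)⁻¹ α β * ξ₀ α * ξ₀ β) P x₀ := by
    rw [hPdef]
    apply HasFDerivAt.fun_sum
    intro α _
    apply HasFDerivAt.fun_sum
    intro β _
    exact ((hcF α β).mul_const (ξ₀ α)).mul_const (ξ₀ β)
  have hrval : (∑ α, ∑ β, (g x₀)⁻¹ α β * ξ₀ α * ξ₀ β) = Q := rfl
  have hsd : HasDerivAt Real.sqrt (1 / (2 * H))
      ((fun x : Fin d → ℝ => ∑ α, ∑ β, (g x)⁻¹ α β * ξ₀ α * ξ₀ β) x₀) := by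
    simpa using Real.hasDerivAt_sqrt hQpos.ne'
  have hsqx : HasFDerivAt
      (fun x : Fin d → ℝ => Real.sqrt (∑ α, ∑ β, (g x)⁻¹ α β * ξ₀ α * ξ₀ β))
      ((1 / (2 * H)) • P) x₀ := hsd.comp_hasFDerivAt x₀ hr
  set Ξd : Fin d → ℝ := fun α => -fderiv ℝ
      (fun x : Fin d → ℝ => Real.sqrt (∑ μ, ∑ ν, (g x)⁻¹ μ ν * ξs t₀ μ * ξs t₀ ν))
      (xs t₀) (Pi.single α 1) with hΞddef
  have hΞdot : HasDerivAt ξs Ξd t₀ := ham2 t₀ ht₀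
  have hΞd : ∀ μ, Ξd μ = -(1 / (2 * H)) * P (Pi.single μ 1) := by
    intro μ
    have : Ξd μ = -(((1 / (2 * H)) • P) (Pi.single μ 1)) := by
      rw [hΞddef, ← hsqx.fderiv]
    rw [this, ContinuousLinearMap.smul_apply, smul_eq_mul]
    ring
  -- φ smoothness machinery
  have hdF : ∀ q ∈ I ×ˢ U, DifferentiableAt ℝ F q := fun q hq =>
    (hφ.contDiffAt (hIU.mem_nhds hq)).differentiableAt (by norm_num)
  set f' : ℝ × (Fin d → ℝ) → ((ℝ × (Fin d → ℝ)) →L[ℝ] ℂ) := fderiv ℝ F with hf'def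
  have hf'C1 : ContDiffOn ℝ 1 f' (I ×ˢ U) := hφ.fderiv_of_isOpen hIU (by norm_num)
  have hf'diff : DifferentiableAt ℝ f' p₀ :=
    (hf'C1.contDiffAt (hIU.mem_nhds hp₀)).differentiableAt (by norm_num)
  set f'' := fderiv ℝ f' p₀ with hf''def
  have hf'd : HasFDerivAt f' f'' p₀ := hf'diff.hasFDerivAt
  have hsymm : ∀ v w, f'' v w = f'' w v := by
    have h := (hφ.contDiffAt (hIU.mem_nhds hp₀)).isSymmSndFDerivAt (by simp)
    exact fun v w => h v w
  have hpx : ∀ s ∈ I, ∀ x ∈ U, fderiv ℝ (fun y => φ s y) x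
      = (f' (s, x)).comp (ContinuousLinearMap.inr ℝ ℝ (Fin d → ℝ)) := by
    intro s hs x hx
    have hFd : HasFDerivAt F (f' (s, x)) (s, x) := (hdF (s,x) ⟨hs, hx⟩).hasFDerivAt
    exact (hFd.comp x (hasFDerivAt_prodMk_right s x)).fderiv
  have hbval : ∀ s ∈ I, ∀ x ∈ U, ∀ α : Fin d,
      f' (s, x) ((0 : ℝ), (Pi.single α 1 : Fin d → ℝ))
      = fderiv ℝ (fun y => φ s y) x (Pi.single α 1) := by
    intro s hs x hx α
    rw [hpx s hs x hx]
    rfl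
  have hpt : ∀ s ∈ I, ∀ x ∈ U, HasDerivAt (fun τ => φ τ x) (f' (s, x) (1, 0)) s := by
    intro s hs x hx
    have hFd : HasFDerivAt F (f' (s, x)) (s, x) := (hdF (s,x) ⟨hs, hx⟩).hasFDerivAt
    have hcurve : HasDerivAt (fun τ : ℝ => (τ, x)) ((1 : ℝ), (0 : Fin d → ℝ)) s :=
      (hasDerivAt_id s).prodMk (hasDerivAt_const s x)
    exact hFd.comp_hasDerivAt s hcurve
  -- time derivative along the flow
  have hγ : HasDerivAt (fun s => (s, xs s)) ((1 : ℝ), Xd) t₀ := (hasDerivAt_id t₀).prodMk hXdot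
  have hFγ : HasDerivAt (fun s => F (s, xs s)) (f' p₀ ((1:ℝ), Xd)) t₀ :=
    by have h := ((hdF p₀ hp₀).hasFDerivAt).comp_hasDerivAt t₀ hγ; exact h
  have hzero : f' p₀ ((1 : ℝ), Xd) = 0 := by
    have hev : (fun _ : ℝ => (0:ℂ)) =ᶠ[nhds t₀] (fun s => F (s, xs s)) :=
      Filter.eventuallyEq_of_mem (hI.mem_nhds ht₀) (fun s hs => (hφ0 s hs).symm)
    have h0 : HasDerivAt (fun _ : ℝ => (0:ℂ)) (f' p₀ ((1:ℝ), Xd)) t₀ :=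
      hFγ.congr_of_eventuallyEq hev
    exact h0.unique (hasDerivAt_const t₀ 0)
  have hbv : ∀ α : Fin d, f' p₀ ((0:ℝ), (Pi.single α 1 : Fin d → ℝ)) = ((ξ₀ α : ℝ) : ℂ) := by
    intro α
    rw [hbval t₀ ht₀ x₀ hx₀ α]
    exact hφx t₀ ht₀ α
  have hsumX : ∑ α, Xd α • ((ξ₀ α : ℝ) : ℂ) = ((H : ℝ) : ℂ) := by
    have h1 : ∑ α, Xd α • ((ξ₀ α : ℝ) : ℂ) = ((∑ α, Xd α * ξ₀ α : ℝ) : ℂ) := by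
      push_cast [Complex.real_smul]
      rfl
    rw [h1, hXsum]
  have hav : f' p₀ ((1:ℝ), (0 : Fin d → ℝ)) = ((-H : ℝ) : ℂ) := by
    have hdec := clm_prod_decomp (f' p₀) 1 Xd
    rw [hzero] at hdec
    simp only [hbv, one_smul] at hdec
    rw [hsumX] at hdec
    push_cast
    linear_combination -hdec
  -- Part 1
  have hpart1 : b₂ t₀ x₀ = 0 := by
    show -(deriv (fun s => φ s x₀) t₀)^2
        + ∑ μ, ∑ ν, (((g x₀)⁻¹ μ ν : ℝ) : ℂ) *
            fderiv ℝ (fun y => φ t₀ y) x₀ (Pi.single μ 1) *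
            fderiv ℝ (fun y => φ t₀ y) x₀ (Pi.single ν 1) = 0
    have hder : deriv (fun s => φ s x₀) t₀ = f' p₀ ((1:ℝ), (0 : Fin d → ℝ)) :=
      (hpt t₀ ht₀ x₀ hx₀).deriv
    have hsum : ∑ μ, ∑ ν, (((g x₀)⁻¹ μ ν : ℝ) : ℂ) *
            fderiv ℝ (fun y => φ t₀ y) x₀ (Pi.single μ 1) *
            fderiv ℝ (fun y => φ t₀ y) x₀ (Pi.single ν 1) = ((Q : ℝ) : ℂ) := by
      rw [hQdef]
      push_cast
      refine Finset.sum_congr rfl fun μ _ => Finset.sum_congr rfl fun ν _ => ?_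
      rw [hφx t₀ ht₀ μ, hφx t₀ ht₀ ν]
    rw [hder, hav, hsum, ← hH2]
    push_cast
    ring
  -- second derivative data
  obtain ⟨T, hTdef⟩ : ∃ T : Fin d → ℂ, ∀ μ, T μ
      = f'' ((0:ℝ), (Pi.single μ 1 : Fin d → ℝ)) ((1:ℝ), (0 : Fin d → ℝ)) := ⟨_, fun _ => rfl⟩
  obtain ⟨S, hSdef⟩ : ∃ S : Fin d → Fin d → ℂ, ∀ μ α, S μ α
      = f'' ((0:ℝ), (Pi.single μ 1 : Fin d → ℝ)) ((0:ℝ), (Pi.single α 1 : Fin d → ℝ)) :=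
    ⟨_, fun _ _ => rfl⟩
  have hkey : ∀ μ : Fin d, T μ + ∑ α, Xd α • S μ α = ((Ξd μ : ℝ) : ℂ) := by
    intro μ
    have hBd : HasDerivAt (fun s => f' (s, xs s) ((0:ℝ), (Pi.single μ 1 : Fin d → ℝ)))
        (f'' ((1:ℝ), Xd) ((0:ℝ), (Pi.single μ 1 : Fin d → ℝ))) t₀ := by
      have happly := (ContinuousLinearMap.apply ℝ ℂ
        ((0:ℝ), (Pi.single μ 1 : Fin d → ℝ))).hasFDerivAt (x := f' p₀)
      have hcomp := happly.comp p₀ hf'd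
      have h2 := hcomp.comp_hasDerivAt t₀ hγ
      simpa [Function.comp_def] using h2
    have hev : (fun s => ((ξs s μ : ℝ) : ℂ))
        =ᶠ[nhds t₀] (fun s => f' (s, xs s) ((0:ℝ), (Pi.single μ 1 : Fin d → ℝ))) := by
      filter_upwards [hI.mem_nhds ht₀] with s hs
      rw [hbval s hs (xs s) (hmem s hs) μ, hφx s hs μ]
    have hξμ : HasDerivAt (fun s => ((ξs s μ : ℝ) : ℂ)) ((Ξd μ : ℝ) : ℂ) t₀ := by
      have h1 : HasDerivAt (fun s => ξs s μ) (Ξd μ) t₀ := by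
        have h2 := (ContinuousLinearMap.proj (R := ℝ) (φ := fun _ : Fin d => ℝ)
          μ).hasFDerivAt.comp_hasDerivAt t₀ hΞdot
        simpa [Function.comp_def] using h2
      have h3 := Complex.ofRealCLM.hasFDerivAt.comp_hasDerivAt t₀ h1
      simpa [Function.comp_def] using h3
    have huniq : f'' ((1:ℝ), Xd) ((0:ℝ), (Pi.single μ 1 : Fin d → ℝ)) = ((Ξd μ : ℝ) : ℂ) :=
      (hBd.congr_of_eventuallyEq hev).unique hξμ
    rw [← huniq, hsymm ((1:ℝ), Xd) ((0:ℝ), (Pi.single μ 1 : Fin d → ℝ)),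
      clm_prod_decomp (f'' ((0:ℝ), (Pi.single μ 1 : Fin d → ℝ))) 1 Xd, one_smul, hTdef μ]
    congr 1
    exact Finset.sum_congr rfl fun α _ => by rw [hSdef μ α]
  refine ⟨hpart1, ?_⟩
  intro μ
  -- spatial derivatives of the building blocks
  have hmk : HasFDerivAt (fun x : Fin d → ℝ => f' (t₀, x))
      (f''.comp (ContinuousLinearMap.inr ℝ ℝ (Fin d → ℝ))) x₀ :=
    hf'd.comp x₀ (hasFDerivAt_prodMk_right t₀ x₀)
  have ha : HasFDerivAt (fun x : Fin d → ℝ => f' (t₀, x) ((1:ℝ), (0 : Fin d → ℝ)))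
      ((ContinuousLinearMap.apply ℝ ℂ ((1:ℝ), (0 : Fin d → ℝ))).comp
        (f''.comp (ContinuousLinearMap.inr ℝ ℝ (Fin d → ℝ)))) x₀ :=
    (ContinuousLinearMap.apply ℝ ℂ ((1:ℝ), (0 : Fin d → ℝ))).hasFDerivAt.comp x₀ hmk
  have hb : ∀ α : Fin d, HasFDerivAt
      (fun x : Fin d → ℝ => f' (t₀, x) ((0:ℝ), (Pi.single α 1 : Fin d → ℝ)))
      ((ContinuousLinearMap.apply ℝ ℂ ((0:ℝ), (Pi.single α 1 : Fin d → ℝ))).comp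
        (f''.comp (ContinuousLinearMap.inr ℝ ℝ (Fin d → ℝ)))) x₀ := fun α =>
    (ContinuousLinearMap.apply ℝ ℂ
      ((0:ℝ), (Pi.single α 1 : Fin d → ℝ))).hasFDerivAt.comp x₀ hmk
  have hGc : ∀ α β : Fin d, HasFDerivAt (fun x => (((g x)⁻¹ α β : ℝ) : ℂ))
      (Complex.ofRealCLM.comp (c α β)) x₀ := fun α β =>
    Complex.ofRealCLM.hasFDerivAt.comp x₀ (hcF α β)
  have hbig := ((ha.fun_mul ha).fun_neg).fun_add (HasFDerivAt.fun_sum (u := Finset.univ) (fun (α : Fin d) _ =>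
    HasFDerivAt.fun_sum (u := Finset.univ) (fun (β : Fin d) _ => ((hGc α β).fun_mul (hb α)).fun_mul (hb β))))
  have hev : (fun x => b₂ t₀ x) =ᶠ[nhds x₀] (fun x =>
      -(f' (t₀, x) ((1:ℝ), (0 : Fin d → ℝ)) * f' (t₀, x) ((1:ℝ), (0 : Fin d → ℝ)))
      + ∑ α, ∑ β, (((g x)⁻¹ α β : ℝ) : ℂ)
          * f' (t₀, x) ((0:ℝ), (Pi.single α 1 : Fin d → ℝ))
          * f' (t₀, x) ((0:ℝ), (Pi.single β 1 : Fin d → ℝ))) := by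
    filter_upwards [hU.mem_nhds hx₀] with x hx
    show -(deriv (fun s => φ s x) t₀)^2
        + ∑ α, ∑ β, (((g x)⁻¹ α β : ℝ) : ℂ) *
            fderiv ℝ (fun y => φ t₀ y) x (Pi.single α 1) *
            fderiv ℝ (fun y => φ t₀ y) x (Pi.single β 1) = _
    rw [(hpt t₀ ht₀ x hx).deriv, pow_two]
    congr 1
    refine Finset.sum_congr rfl fun α _ => Finset.sum_congr rfl fun β _ => ?_
    rw [← hbval t₀ ht₀ x hx α, ← hbval t₀ ht₀ x hx β]
  rw [hev.fderiv_eq, hbig.fderiv]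
  simp only [ContinuousLinearMap.add_apply, ContinuousLinearMap.neg_apply,
    ContinuousLinearMap.smul_apply, ContinuousLinearMap.coe_sum', Finset.sum_apply,
    ContinuousLinearMap.coe_comp', Function.comp_apply, ContinuousLinearMap.apply_apply,
    ContinuousLinearMap.inr_apply, ContinuousLinearMap.coe_smul', Pi.smul_apply,
    smul_eq_mul, Complex.ofRealCLM_apply]
  have hGfold : ((g x₀)⁻¹ : Matrix (Fin d) (Fin d) ℝ) = G := hGdef.symm
  rw [hGfold]
  have hav' : f' (t₀, x₀) ((1:ℝ), (0 : Fin d → ℝ)) = ((-H : ℝ) : ℂ) := hav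
  have hbv' : ∀ α : Fin d, f' (t₀, x₀) ((0:ℝ), (Pi.single α 1 : Fin d → ℝ))
      = ((ξ₀ α : ℝ) : ℂ) := hbv
  simp only [← hTdef, ← hSdef, hav', hbv']
  -- fold the value facts
  have hWc : ∀ β, ∑ α, ((G α β : ℝ) : ℂ) * ((ξ₀ α : ℝ) : ℂ) = ((H * Xd β : ℝ) : ℂ) := by
    intro β
    have h1 : ∑ α, G α β * ξ₀ α = H * Xd β := by
      have h2 : ∑ α, G α β * ξ₀ α = W β := by
        simp only [hWdef]
        exact Finset.sum_congr rfl fun α _ => by rw [hGsym α β]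
      rw [h2, hXd β]
      field_simp
    rw [← h1]
    push_cast
    rfl
  have hWc2 : ∀ α, ∑ β, ((G α β : ℝ) : ℂ) * ((ξ₀ β : ℝ) : ℂ) = ((H * Xd α : ℝ) : ℂ) := by
    intro α
    have h1 : ∑ β, G α β * ξ₀ β = H * Xd α := by
      have h2 : ∑ β, G α β * ξ₀ β = W α := by simp only [hWdef]
      rw [h2, hXd α]
      field_simp
    rw [← h1]
    push_cast
    rfl
  have hSfold : ∑ α, ((H * Xd α : ℝ) : ℂ) * S μ α = (H:ℂ) * (((Ξd μ : ℝ):ℂ) - T μ) := by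
    have h2 : ∑ α, Xd α • S μ α = ((Ξd μ : ℝ):ℂ) - T μ := by rw [← hkey μ]; ring
    calc ∑ α, ((H * Xd α : ℝ) : ℂ) * S μ α = (H:ℂ) * ∑ α, Xd α • S μ α := by
          rw [Finset.mul_sum]
          refine Finset.sum_congr rfl fun α _ => ?_
          rw [Complex.real_smul]
          push_cast
          ring
      _ = (H:ℂ) * (((Ξd μ : ℝ):ℂ) - T μ) := by rw [h2]
  have hD1 : ∑ α, ∑ β, ((G α β : ℝ):ℂ) * ((ξ₀ α : ℝ):ℂ) * S μ β
      = (H:ℂ) * (((Ξd μ : ℝ):ℂ) - T μ) := by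
    rw [Finset.sum_comm]
    calc ∑ β, ∑ α, ((G α β : ℝ):ℂ) * ((ξ₀ α : ℝ):ℂ) * S μ β
        = ∑ β, ((H * Xd β : ℝ):ℂ) * S μ β :=
          Finset.sum_congr rfl fun β _ => by rw [← Finset.sum_mul, hWc β]
      _ = (H:ℂ) * (((Ξd μ : ℝ):ℂ) - T μ) := hSfold
  have hD2 : ∑ α, ∑ β, ((G α β : ℝ):ℂ) * ((ξ₀ β : ℝ):ℂ) * S μ α
      = (H:ℂ) * (((Ξd μ : ℝ):ℂ) - T μ) := by
    calc ∑ α, ∑ β, ((G α β : ℝ):ℂ) * ((ξ₀ β : ℝ):ℂ) * S μ α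
        = ∑ α, ((H * Xd α : ℝ):ℂ) * S μ α :=
          Finset.sum_congr rfl fun α _ => by rw [← Finset.sum_mul, hWc2 α]
      _ = (H:ℂ) * (((Ξd μ : ℝ):ℂ) - T μ) := hSfold
  have hD3 : ∑ α, ∑ β, ((ξ₀ β : ℝ):ℂ) * (((ξ₀ α : ℝ):ℂ) * (((c α β) (Pi.single μ 1) : ℝ):ℂ))
      = ((P (Pi.single μ 1) : ℝ) : ℂ) := by
    have h1 : P (Pi.single μ 1) = ∑ α, ∑ β, ξ₀ β * (ξ₀ α * (c α β) (Pi.single μ 1)) := by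
      rw [hPdef]
      simp [ContinuousLinearMap.sum_apply, ContinuousLinearMap.smul_apply, smul_eq_mul]
    rw [h1]
    push_cast
    rfl
  calc -(((-H:ℝ):ℂ) * T μ + ((-H:ℝ):ℂ) * T μ)
        + ∑ α, ∑ β, (((G α β : ℝ):ℂ) * ((ξ₀ α : ℝ):ℂ) * S μ β
          + ((ξ₀ β : ℝ):ℂ) * (((G α β : ℝ):ℂ) * S μ α
            + ((ξ₀ α : ℝ):ℂ) * (((c α β) (Pi.single μ 1) : ℝ):ℂ)))
      = -(((-H:ℝ):ℂ) * T μ + ((-H:ℝ):ℂ) * T μ)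
        + ((∑ α, ∑ β, ((G α β : ℝ):ℂ) * ((ξ₀ α : ℝ):ℂ) * S μ β)
          + ((∑ α, ∑ β, ((G α β : ℝ):ℂ) * ((ξ₀ β : ℝ):ℂ) * S μ α)
            + ∑ α, ∑ β, ((ξ₀ β : ℝ):ℂ) * (((ξ₀ α : ℝ):ℂ)
              * (((c α β) (Pi.single μ 1) : ℝ):ℂ)))) := by
        congr 1
        rw [← Finset.sum_add_distrib, ← Finset.sum_add_distrib]
        refine Finset.sum_congr rfl fun α _ => ?_
        rw [← Finset.sum_add_distrib, ← Finset.sum_add_distrib]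
        exact Finset.sum_congr rfl fun β _ => by ring
    _ = 0 := by
        rw [hD1, hD2, hD3, hΞd μ]
        have hH0 : (H:ℂ) ≠ 0 := Complex.ofReal_ne_zero.mpr hHpos.ne'
        push_cast
        field_simp
        ring
end

section
/- Let U ⊆ ℝ^d be open, let F : U → ℂ^d be a C^∞ map whose complex Jacobian matrix J(x) (entries J(x)_{αβ} = ∂F_β/∂x^α) is invertible for every x ∈ U, let L_α f = Σ_β (J⁻¹)_{αβ} ∂f/∂x^β, and for k ≥ 0 let F_k := Σ_{|𝛂|=k} (F^𝛂/𝛂!) L_𝛂 (with F_0 = Id). Then for every multi-index 𝛃 ∈ ℕ₀^d and every k ≥ 0: if |𝛃| < k then F_k(F^𝛃) = 0 identically on U, and if |𝛃| ≥ k then F_k(F^𝛃) = binom(|𝛃|, k) · F^𝛃 identically on U, where binom denotes the binomial coefficient. -/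
open scoped BigOperators

lemma auxPow {E : Type*} [NormedAddCommGroup E] [NormedSpace ℝ E]
    {f : E → ℂ} {f' : E →L[ℝ] ℂ} {x : E} (h : HasFDerivAt f f' x) (n : ℕ) :
    HasFDerivAt (fun y => f y ^ n) (((n : ℂ) * f x ^ (n - 1)) • f') x := by
  induction n with
  | zero =>
    have h0 : (((0 : ℕ) : ℂ) * f x ^ (0 - 1)) • f' = 0 := by
      ext v; simp
    simp only [pow_zero, h0]
    exact hasFDerivAt_const 1 x
  | succ n ih =>
    have h2 := h.mul ih
    have heq : (fun y => f y ^ (n + 1)) = fun y => f y * f y ^ n := by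
      ext y; rw [pow_succ]; ring
    have hcoef : (((n + 1 : ℕ) : ℂ) * f x ^ (n + 1 - 1)) • f'
        = f x • ((n : ℂ) * f x ^ (n - 1)) • f' + (f x ^ n) • f' := by
      ext v
      simp only [ContinuousLinearMap.add_apply, ContinuousLinearMap.coe_smul',
        Pi.smul_apply, smul_eq_mul]
      cases n with
      | zero => simp
      | succ m =>
        simp only [Nat.add_sub_cancel]
        push_cast
        ring
    rw [heq, hcoef]
    exact h2

/-- The first-order operator `L_α`. -/
noncomputable def auxL {d : ℕ} (J : (Fin d → ℝ) → Matrix (Fin d) (Fin d) ℂ)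
    (α : Fin d) (f : (Fin d → ℝ) → ℂ) (x : Fin d → ℝ) : ℂ :=
  ∑ β, (J x)⁻¹ α β * fderiv ℝ f x (Pi.single β 1)

section Main

variable {d : ℕ} {U : Set (Fin d → ℝ)} {F : (Fin d → ℝ) → Fin d → ℂ}
  {J : (Fin d → ℝ) → Matrix (Fin d) (Fin d) ℂ}

lemma auxCompDiff (hU : IsOpen U) (hF : ContDiffOn ℝ (⊤ : ℕ∞) (fun x => F x) U)
    {x : Fin d → ℝ} (hx : x ∈ U) (i : Fin d) :
    DifferentiableAt ℝ (fun y => F y i) x :=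
  differentiableAt_pi.mp ((hF.contDiffAt (hU.mem_nhds hx)).differentiableAt (by simp)) i

lemma auxMonoHasFDeriv (hU : IsOpen U) (hF : ContDiffOn ℝ (⊤ : ℕ∞) (fun x => F x) U)
    {x : Fin d → ℝ} (hx : x ∈ U) (b : Fin d → ℕ) :
    HasFDerivAt (fun y => ∏ i, F y i ^ b i)
      (∑ γ, ((∏ j ∈ Finset.univ.erase γ, F x j ^ b j)
          * ((b γ : ℂ) * F x γ ^ (b γ - 1))) • fderiv ℝ (fun y => F y γ) x) x := by
  have h : ∀ γ : Fin d, HasFDerivAt (fun y => F y γ ^ b γ)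
      (((b γ : ℂ) * F x γ ^ (b γ - 1)) • fderiv ℝ (fun y => F y γ) x) x :=
    fun γ => auxPow (auxCompDiff hU hF hx γ).hasFDerivAt (b γ)
  have h2 := HasFDerivAt.finset_prod (u := Finset.univ)
    (g := fun i y => F y i ^ b i)
    (g' := fun γ => ((b γ : ℂ) * F x γ ^ (b γ - 1)) • fderiv ℝ (fun y => F y γ) x)
    (fun i _ => h i)
  simpa only [smul_smul] using h2

/-- Action of `L_α` on a constant times a monomial. -/
lemma auxLMono (hU : IsOpen U) (hF : ContDiffOn ℝ (⊤ : ℕ∞) (fun x => F x) U)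
    (hJ : ∀ x : Fin d → ℝ, ∀ α β : Fin d,
      J x α β = fderiv ℝ (fun y => F y β) x (Pi.single α 1))
    (hinv : ∀ x ∈ U, IsUnit (J x).det)
    {x : Fin d → ℝ} (hx : x ∈ U) (α : Fin d) (b : Fin d → ℕ) (c : ℂ) :
    auxL J α (fun y => c * ∏ i, F y i ^ b i) x
      = c * (b α : ℂ) * ∏ i, F x i ^ (b i - (Pi.single α 1 : Fin d → ℕ) i) := by
  have hm := auxMonoHasFDeriv hU hF hx b
  have hder : fderiv ℝ (fun y => c * ∏ i, F y i ^ b i) x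
      = c • fderiv ℝ (fun y => ∏ i, F y i ^ b i) x :=
    fderiv_const_mul hm.differentiableAt c
  set cγ : Fin d → ℂ := fun γ =>
    (∏ j ∈ Finset.univ.erase γ, F x j ^ b j) * ((b γ : ℂ) * F x γ ^ (b γ - 1)) with hcγ
  have happ : ∀ β : Fin d, fderiv ℝ (fun y => ∏ i, F y i ^ b i) x (Pi.single β 1)
      = ∑ γ, cγ γ * J x β γ := by
    intro β
    rw [hm.fderiv]
    rw [ContinuousLinearMap.sum_apply]
    refine Finset.sum_congr rfl fun γ _ => ?_
    rw [ContinuousLinearMap.smul_apply, smul_eq_mul, hJ x β γ]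
  have hmatrix : ∀ γ : Fin d, (∑ β, (J x)⁻¹ α β * J x β γ) = if α = γ then 1 else 0 := by
    intro γ
    have h1 : (J x)⁻¹ * J x = 1 := Matrix.nonsing_inv_mul _ (hinv x hx)
    calc (∑ β, (J x)⁻¹ α β * J x β γ) = ((J x)⁻¹ * J x) α γ := (Matrix.mul_apply).symm
      _ = (1 : Matrix (Fin d) (Fin d) ℂ) α γ := by rw [h1]
      _ = if α = γ then 1 else 0 := Matrix.one_apply
  have hL : auxL J α (fun y => c * ∏ i, F y i ^ b i) x = c * cγ α := by
    unfold auxL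
    simp only [hder, ContinuousLinearMap.coe_smul', Pi.smul_apply, smul_eq_mul, happ]
    calc ∑ β, (J x)⁻¹ α β * (c * ∑ γ, cγ γ * J x β γ)
        = ∑ β, ∑ γ, c * (cγ γ * ((J x)⁻¹ α β * J x β γ)) := by
          refine Finset.sum_congr rfl fun β _ => ?_
          rw [Finset.mul_sum, Finset.mul_sum]
          refine Finset.sum_congr rfl fun γ _ => by ring
      _ = ∑ γ, ∑ β, c * (cγ γ * ((J x)⁻¹ α β * J x β γ)) := Finset.sum_comm
      _ = ∑ γ, c * (cγ γ * ∑ β, (J x)⁻¹ α β * J x β γ) := by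
          refine Finset.sum_congr rfl fun γ _ => ?_
          rw [Finset.mul_sum, Finset.mul_sum]
      _ = ∑ γ, c * (cγ γ * if α = γ then 1 else 0) := by
          refine Finset.sum_congr rfl fun γ _ => by rw [hmatrix]
      _ = c * cγ α := by
          rw [Finset.sum_eq_single α]
          · simp
          · intro γ _ hγ
            rw [if_neg (fun h => hγ h.symm), mul_zero, mul_zero]
          · intro h; exact absurd (Finset.mem_univ α) h
  rw [hL, hcγ]
  have hprod : ∏ i, F x i ^ (b i - (Pi.single α 1 : Fin d → ℕ) i)
      = F x α ^ (b α - 1) * ∏ j ∈ Finset.univ.erase α, F x j ^ b j := by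
    rw [← Finset.mul_prod_erase Finset.univ _ (Finset.mem_univ α)]
    congr 1
    · congr 1
      simp [Pi.single_apply]
    · refine Finset.prod_congr rfl fun j hj => ?_
      have : j ≠ α := (Finset.mem_erase.mp hj).1
      congr 1
      simp [Pi.single_apply, this]
  rw [hprod]
  ring

end Main

section Main2

variable {d : ℕ} {U : Set (Fin d → ℝ)} {F : (Fin d → ℝ) → Fin d → ℂ}
  {J : (Fin d → ℝ) → Matrix (Fin d) (Fin d) ℂ}

lemma auxLCongr (hU : IsOpen U) {f g : (Fin d → ℝ) → ℂ} (hfg : Set.EqOn f g U)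
    {x : Fin d → ℝ} (hx : x ∈ U) (α : Fin d) : auxL J α f x = auxL J α g x := by
  unfold auxL
  have : fderiv ℝ f x = fderiv ℝ g x :=
    Filter.EventuallyEq.fderiv_eq (Filter.eventuallyEq_of_mem (hU.mem_nhds hx) hfg)
  rw [this]

lemma auxIterL (hU : IsOpen U) (hF : ContDiffOn ℝ (⊤ : ℕ∞) (fun x => F x) U)
    (hJ : ∀ x : Fin d → ℝ, ∀ α β : Fin d,
      J x α β = fderiv ℝ (fun y => F y β) x (Pi.single α 1))
    (hinv : ∀ x ∈ U, IsUnit (J x).det)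
    (α : Fin d) (n : ℕ) (c : ℂ) (b : Fin d → ℕ)
    {f : (Fin d → ℝ) → ℂ} (hf : Set.EqOn f (fun y => c * ∏ i, F y i ^ b i) U) :
    Set.EqOn ((auxL J α)^[n] f)
      (fun y => (c * ((b α).descFactorial n : ℂ))
        * ∏ i, F y i ^ (b i - n * (Pi.single α 1 : Fin d → ℕ) i)) U := by
  induction n with
  | zero => simpa using hf
  | succ n ih =>
    intro x hx
    rw [Function.iterate_succ_apply']
    rw [auxLCongr hU ih hx α]
    rw [auxLMono hU hF hJ hinv hx α _ _]
    have hα : (b α - n * (Pi.single α 1 : Fin d → ℕ) α) = b α - n := by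
      simp [Pi.single_apply]
    have hdesc : (c * ((b α).descFactorial n : ℂ)) * ((b α - n * (Pi.single α 1 : Fin d → ℕ) α : ℕ) : ℂ)
        = c * ((b α).descFactorial (n + 1) : ℂ) := by
      rw [hα, Nat.descFactorial_succ]
      push_cast
      ring
    rw [hdesc]
    congr 1
    refine Finset.prod_congr rfl fun i _ => ?_
    congr 1
    simp only [Pi.single_apply]
    by_cases h : i = α <;> simp [h] <;> omega

lemma auxListL (hU : IsOpen U) (hF : ContDiffOn ℝ (⊤ : ℕ∞) (fun x => F x) U)
    (hJ : ∀ x : Fin d → ℝ, ∀ α β : Fin d,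
      J x α β = fderiv ℝ (fun y => F y β) x (Pi.single α 1))
    (hinv : ∀ x ∈ U, IsUnit (J x).det)
    (m : Fin d → ℕ) :
    ∀ (l : List (Fin d)), l.Nodup → ∀ (c : ℂ) (b : Fin d → ℕ)
      (f : (Fin d → ℝ) → ℂ), Set.EqOn f (fun y => c * ∏ i, F y i ^ b i) U →
    Set.EqOn ((l.map (fun i => (auxL J i)^[m i])).foldr (· ∘ ·) id f)
      (fun y => (c * ∏ i ∈ l.toFinset, ((b i).descFactorial (m i) : ℂ))
        * ∏ i, F y i ^ (b i - ∑ j ∈ l.toFinset, m j * (Pi.single j 1 : Fin d → ℕ) i)) U := by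
  intro l
  induction l with
  | nil =>
    intro _ c b f hf
    simpa using hf
  | cons a t ih =>
    intro hnd c b f hf
    have ha : a ∉ t := (List.nodup_cons.mp hnd).1
    have ht : t.Nodup := (List.nodup_cons.mp hnd).2
    have hinner := ih ht c b f hf
    simp only [List.map_cons, List.foldr_cons, Function.comp_apply]
    have hstep := auxIterL hU hF hJ hinv a (m a)
      (c * ∏ i ∈ t.toFinset, ((b i).descFactorial (m i) : ℂ))
      (fun i => b i - ∑ j ∈ t.toFinset, m j * (Pi.single j 1 : Fin d → ℕ) i)
      hinner
    intro x hx
    have haT : a ∉ t.toFinset := by simpa using ha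
    have hkey := hstep hx
    have hsingle : ∀ j ∈ t.toFinset, m j * (Pi.single j 1 : Fin d → ℕ) a = 0 := by
      intro j hj
      have hja : j ≠ a := fun h => haT (h ▸ hj)
      have h0 : (Pi.single j 1 : Fin d → ℕ) a = 0 := by
        rw [Pi.single_apply, if_neg (fun h => hja h.symm)]
      rw [h0, Nat.mul_zero]
    have hba : b a - ∑ j ∈ t.toFinset, m j * (Pi.single j 1 : Fin d → ℕ) a = b a := by
      rw [Finset.sum_eq_zero hsingle]
      omega
    simp only [List.toFinset_cons]
    rw [hkey]
    dsimp only
    rw [hba]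
    have hexp : ∏ i, F x i ^ ((b i - ∑ j ∈ t.toFinset, m j * (Pi.single j 1 : Fin d → ℕ) i)
          - m a * (Pi.single a 1 : Fin d → ℕ) i)
        = ∏ i, F x i ^ (b i - (m a * (Pi.single a 1 : Fin d → ℕ) i
          + ∑ j ∈ t.toFinset, m j * (Pi.single j 1 : Fin d → ℕ) i)) :=
      Finset.prod_congr rfl fun i _ => by congr 1; omega
    rw [hexp, Finset.prod_insert haT]
    simp only [Finset.sum_insert haT]
    ring

end Main2

lemma auxVandermonde : ∀ (d : ℕ) (b : Fin d → ℕ) (k : ℕ),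
    ∑ m ∈ Finset.Nat.antidiagonalTuple d k, ∏ i, (b i).choose (m i)
      = (∑ i, b i).choose k := by
  intro d
  induction d with
  | zero =>
    intro b k
    cases k with
    | zero => simp [Finset.Nat.antidiagonalTuple_zero_zero]
    | succ k => simp [Finset.Nat.antidiagonalTuple_zero_succ]
  | succ d ih =>
    intro b k
    have hstep : ∑ m ∈ Finset.Nat.antidiagonalTuple (d + 1) k, ∏ i, (b i).choose (m i)
        = ∑ p ∈ (Finset.HasAntidiagonal.antidiagonal k).sigma
            (fun p : ℕ × ℕ => Finset.Nat.antidiagonalTuple d p.2),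
            (b 0).choose p.1.1 * ∏ i, (b i.succ).choose (p.2 i) := by
      refine Finset.sum_nbij' (i := fun m => ⟨(m 0, ∑ j, Fin.tail m j), Fin.tail m⟩)
        (j := fun p => Fin.cons p.1.1 p.2) ?_ ?_ ?_ ?_ ?_
      · intro m hm
        rw [Finset.Nat.mem_antidiagonalTuple] at hm
        simp only [Finset.mem_sigma, Finset.HasAntidiagonal.mem_antidiagonal,
          Finset.Nat.mem_antidiagonalTuple]
        constructor
        · rw [← hm, Fin.sum_univ_succ]
          rfl
        · trivial
      · intro p hp
        simp only [Finset.mem_sigma, Finset.HasAntidiagonal.mem_antidiagonal,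
          Finset.Nat.mem_antidiagonalTuple] at hp
        rw [Finset.Nat.mem_antidiagonalTuple, Fin.sum_cons, hp.2, ← hp.1]
      · intro m hm
        exact Fin.cons_self_tail m
      · intro p hp
        simp only [Finset.mem_sigma, Finset.HasAntidiagonal.mem_antidiagonal,
          Finset.Nat.mem_antidiagonalTuple] at hp
        refine Sigma.ext ?_ (by simp [Fin.tail_cons])
        simp [Fin.tail_cons, hp.2]
      · intro m hm
        rw [Fin.prod_univ_succ]
        rfl
    rw [hstep, Finset.sum_sigma]
    have hinner : ∀ p ∈ Finset.HasAntidiagonal.antidiagonal k,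
        ∑ q ∈ Finset.Nat.antidiagonalTuple d p.2,
          (b 0).choose p.1 * ∏ i : Fin d, (b (Fin.succ i)).choose (q i)
        = (b 0).choose p.1 * (∑ i : Fin d, b (Fin.succ i)).choose p.2 := by
      intro p _
      rw [← Finset.mul_sum, ih]
    rw [Finset.sum_congr rfl hinner, Fin.sum_univ_succ, Nat.add_choose_eq]


section Final

variable {d : ℕ} {U : Set (Fin d → ℝ)} {F : (Fin d → ℝ) → Fin d → ℂ}
  {J : (Fin d → ℝ) → Matrix (Fin d) (Fin d) ℂ}

lemma auxLmMono (hU : IsOpen U) (hF : ContDiffOn ℝ (⊤ : ℕ∞) (fun x => F x) U)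
    (hJ : ∀ x : Fin d → ℝ, ∀ α β : Fin d,
      J x α β = fderiv ℝ (fun y => F y β) x (Pi.single α 1))
    (hinv : ∀ x ∈ U, IsUnit (J x).det) (m b : Fin d → ℕ)
    {x : Fin d → ℝ} (hx : x ∈ U) :
    (List.ofFn fun i : Fin d => (auxL J i)^[m i]).foldr (· ∘ ·) id
        (fun y => ∏ i, F y i ^ b i) x
      = (∏ i, ((b i).descFactorial (m i) : ℂ)) * ∏ i, F x i ^ (b i - m i) := by
  have hf : Set.EqOn (fun y => ∏ i, F y i ^ b i)
      (fun y => (1 : ℂ) * ∏ i, F y i ^ b i) U := fun y _ => (one_mul _).symm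
  have h := auxListL hU hF hJ hinv m (List.finRange d) (List.nodup_finRange d) 1 b _ hf hx
  rw [List.ofFn_eq_map, h]
  have hsum : ∀ i : Fin d, (∑ j, m j * (Pi.single j 1 : Fin d → ℕ) i) = m i := by
    intro i
    simp [Pi.single_apply, mul_ite, Finset.sum_ite_eq]
  simp only [List.toFinset_finRange, one_mul, hsum]

lemma auxTerm (x : Fin d → ℝ) (b m : Fin d → ℕ) :
    (∏ i, F x i ^ m i) / (∏ i, ((m i).factorial : ℂ))
      * ((∏ i, ((b i).descFactorial (m i) : ℂ)) * ∏ i, F x i ^ (b i - m i))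
    = (∏ i, ((b i).choose (m i) : ℂ)) * ∏ i, F x i ^ b i := by
  by_cases h : ∀ i, m i ≤ b i
  · have hfac : (∏ i, ((m i).factorial : ℂ)) ≠ 0 :=
      Finset.prod_ne_zero_iff.mpr fun i _ => by exact_mod_cast (m i).factorial_ne_zero
    have hdesc : (∏ i, ((b i).descFactorial (m i) : ℂ))
        = (∏ i, ((m i).factorial : ℂ)) * ∏ i, ((b i).choose (m i) : ℂ) := by
      rw [← Finset.prod_mul_distrib]
      refine Finset.prod_congr rfl fun i _ => ?_
      rw [Nat.descFactorial_eq_factorial_mul_choose]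
      push_cast
      ring
    have hpow : (∏ i, F x i ^ m i) * ∏ i, F x i ^ (b i - m i) = ∏ i, F x i ^ b i := by
      rw [← Finset.prod_mul_distrib]
      refine Finset.prod_congr rfl fun i _ => ?_
      rw [← pow_add]
      congr 1
      have := h i
      omega
    rw [hdesc, div_mul_eq_mul_div,
      show (∏ i, F x i ^ m i) * ((∏ i, ((m i).factorial : ℂ))
          * (∏ i, ((b i).choose (m i) : ℂ)) * ∏ i, F x i ^ (b i - m i))
        = (∏ i, ((m i).factorial : ℂ))
          * ((∏ i, ((b i).choose (m i) : ℂ)) * ∏ i, F x i ^ b i) from by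
        rw [← hpow]; ring]
    exact mul_div_cancel_left₀ _ hfac
  · push_neg at h
    obtain ⟨i0, hi0⟩ := h
    have h1 : ((b i0).descFactorial (m i0) : ℂ) = 0 := by
      rw [Nat.descFactorial_eq_zero_iff_lt.mpr hi0]; simp
    have h2 : ((b i0).choose (m i0) : ℂ) = 0 := by
      rw [Nat.choose_eq_zero_of_lt hi0]; simp
    rw [Finset.prod_eq_zero (f := fun i => (((b i).descFactorial (m i) : ℕ) : ℂ))
        (Finset.mem_univ i0) h1,
      Finset.prod_eq_zero (f := fun i => (((b i).choose (m i) : ℕ) : ℂ))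
        (Finset.mem_univ i0) h2]
    ring

lemma auxMain (hU : IsOpen U) (hF : ContDiffOn ℝ (⊤ : ℕ∞) (fun x => F x) U)
    (hJ : ∀ x : Fin d → ℝ, ∀ α β : Fin d,
      J x α β = fderiv ℝ (fun y => F y β) x (Pi.single α 1))
    (hinv : ∀ x ∈ U, IsUnit (J x).det)
    (b : Fin d → ℕ) (k : ℕ) (x : Fin d → ℝ) (hx : x ∈ U) :
    (∑ m ∈ Finset.Nat.antidiagonalTuple d k,
        ((∏ i, F x i ^ m i) / (∏ i, ((m i).factorial : ℂ)))
          * ((List.ofFn fun i : Fin d => (auxL J i)^[m i]).foldr (· ∘ ·) id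
              (fun y => ∏ i, F y i ^ b i) x))
      = ((Nat.choose (∑ i, b i) k : ℕ) : ℂ) * ∏ i, F x i ^ b i := by
  have h1 : ∀ m ∈ Finset.Nat.antidiagonalTuple d k,
      ((∏ i, F x i ^ m i) / (∏ i, ((m i).factorial : ℂ)))
        * ((List.ofFn fun i : Fin d => (auxL J i)^[m i]).foldr (· ∘ ·) id
            (fun y => ∏ i, F y i ^ b i) x)
      = (∏ i, ((b i).choose (m i) : ℂ)) * ∏ i, F x i ^ b i := by
    intro m _
    rw [auxLmMono hU hF hJ hinv m b hx]
    exact auxTerm x b m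
  rw [Finset.sum_congr rfl h1, ← Finset.sum_mul]
  congr 1
  rw [← auxVandermonde d b k]
  push_cast
  rfl

end Final

/-- Generalised Euler identity: the monomials `F^𝛃` are eigenfunctions of the operators
`F_k`, namely `F_k(F^𝛃) = 0` if `|𝛃| < k` and `F_k(F^𝛃) = binom(|𝛃|,k) F^𝛃` if `|𝛃| ≥ k`. -/
theorem stmt_15 (d : ℕ) (hd : 1 ≤ d)
    (U : Set (Fin d → ℝ)) (hU : IsOpen U)
    (F : (Fin d → ℝ) → Fin d → ℂ)
    (hF : ContDiffOn ℝ (⊤ : ℕ∞) (fun x => F x) U)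
    (J : (Fin d → ℝ) → Matrix (Fin d) (Fin d) ℂ)
    (hJ : ∀ x : Fin d → ℝ, ∀ α β : Fin d,
      J x α β = fderiv ℝ (fun y => F y β) x (Pi.single α 1))
    (hinv : ∀ x ∈ U, IsUnit (J x).det) :
    let L : Fin d → ((Fin d → ℝ) → ℂ) → (Fin d → ℝ) → ℂ := fun α f x =>
      ∑ β, (J x)⁻¹ α β * fderiv ℝ f x (Pi.single β 1)
    let Lm : (Fin d → ℕ) → ((Fin d → ℝ) → ℂ) → (Fin d → ℝ) → ℂ := fun m =>
      (List.ofFn fun i : Fin d => (L i)^[m i]).foldr (· ∘ ·) id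
    let Fop : ℕ → ((Fin d → ℝ) → ℂ) → (Fin d → ℝ) → ℂ := fun k f x =>
      ∑ m ∈ Finset.Nat.antidiagonalTuple d k,
        ((∏ i, F x i ^ m i) / (∏ i, ((m i).factorial : ℂ))) * Lm m f x
    ∀ b : Fin d → ℕ, ∀ k : ℕ, ∀ x ∈ U,
      ((∑ i, b i) < k → Fop k (fun y => ∏ i, F y i ^ b i) x = 0) ∧
      (k ≤ ∑ i, b i →
        Fop k (fun y => ∏ i, F y i ^ b i) x
          = ((Nat.choose (∑ i, b i) k : ℕ) : ℂ) * ∏ i, F x i ^ b i) := by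
  intro L Lm Fop b k x hx
  have key : Fop k (fun y => ∏ i, F y i ^ b i) x
      = ((Nat.choose (∑ i, b i) k : ℕ) : ℂ) * ∏ i, F x i ^ b i :=
    auxMain hU hF hJ hinv b k x hx
  constructor
  · intro hlt
    rw [key, Nat.choose_eq_zero_of_lt hlt]
    simp
  · intro _
    exact key
end
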